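/- Two-pass threshold guarantee with matroid constraint: let M = (Ω, I) be a matroid, f non-negative submodular with f(∅) = 0, and run the two-set threshold algorithm with threshold ετ: process elements in any order, adding e to S₁ if its marginal to S₁ is ≥ ετ and S₁ + e ∈ I, else to S₂ under the same conditions. If |S₁|, |S₂| < |C*_τ|/4 for a set C*_τ ∈ I whose greedy marginals are all ≥ τ, then there exists A ⊆ C*_τ disjoint from S₁ ∪ S₂ with |A| ≥ |C*_τ|/2 such that S₁ ∪ A ∈ I and S₂ ∪ A ∈ I, and f(S₁) + f(S₂) ≥ (1 − 2ε)·τ·|A|. -/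

import Mathlib

open Finset

def Submodular {Ω : Type*} [DecidableEq Ω] (f : Finset Ω → ℝ) : Prop :=
  ∀ S T : Finset Ω, f (S ∪ T) + f (S ∩ T) ≤ f S + f T

/-- `Indep` defines a matroid: contains `∅`, downward closed, exchange property. -/
def IsMatroid {Ω : Type*} [DecidableEq Ω] (Indep : Finset Ω → Prop) : Prop :=
  Indep ∅ ∧ (∀ A B : Finset Ω, Indep A → B ⊆ A → Indep B) ∧
    ∀ A B : Finset Ω, Indep A → Indep B → A.card < B.card →
      ∃ x ∈ B \ A, Indep (insert x A)

-- One step of the two-set threshold algorithm with threshold `θ`: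
-- try to add the arriving element to `S₁`, else to `S₂`, else discard it.
open scoped Classical in
noncomputable def twoStep {Ω : Type*} [DecidableEq Ω] (f : Finset Ω → ℝ)
    (Indep : Finset Ω → Prop) (θ : ℝ) (P : Finset Ω × Finset Ω) (e : Ω) :
    Finset Ω × Finset Ω :=
  if Indep (insert e P.1) ∧ θ ≤ f (insert e P.1) - f P.1 then (insert e P.1, P.2)
  else if Indep (insert e P.2) ∧ θ ≤ f (insert e P.2) - f P.2 then (P.1, insert e P.2)
  else P

section Aux

variable {Ω : Type*} [DecidableEq Ω] {f : Finset Ω → ℝ} {Indep : Finset Ω → Prop} {θ : ℝ}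

/-- Matroid extension: any independent set can be augmented from another independent
set `B` to reach size at least `B.card`. -/
lemma matroid_extend_aux (hM : IsMatroid Indep) (B : Finset Ω) (hB : Indep B) :
    ∀ (n : ℕ) (S : Finset Ω), Indep S → B.card ≤ S.card + n →
      ∃ A : Finset Ω, A ⊆ B ∧ Disjoint A S ∧ Indep (S ∪ A) ∧ B.card ≤ S.card + A.card := by
  intro n
  induction n with
  | zero =>
    intro S hS hc
    exact ⟨∅, empty_subset _, disjoint_empty_left _, by simpa using hS, by simpa using hc⟩
  | succ n ih =>
    intro S hS hc
    by_cases h : B.card ≤ S.card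
    · exact ⟨∅, empty_subset _, disjoint_empty_left _, by simpa using hS, by simpa using h⟩
    · obtain ⟨x, hx, hxI⟩ := hM.2.2 S B hS hB (lt_of_not_ge h)
      rw [mem_sdiff] at hx
      have hcard : (insert x S).card = S.card + 1 := card_insert_of_notMem hx.2
      obtain ⟨A', hA'B, hA'd, hA'I, hA'c⟩ := ih (insert x S) hxI (by omega)
      refine ⟨insert x A', insert_subset hx.1 hA'B, ?_, ?_, ?_⟩
      · rw [disjoint_insert_left]
        exact ⟨hx.2, hA'd.mono_right (subset_insert _ _)⟩
      · have : S ∪ insert x A' = insert x S ∪ A' := by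
          ext y; simp [or_comm, or_assoc, or_left_comm]
        rw [this]; exact hA'I
      · have hx' : x ∉ A' := by
          have := disjoint_left.mp hA'd
          intro hxA; exact (this hxA) (mem_insert_self _ _)
        rw [card_insert_of_notMem hx']
        omega

lemma twoStep_fst_subset (P : Finset Ω × Finset Ω) (e : Ω) :
    P.1 ⊆ (twoStep f Indep θ P e).1 := by
  unfold twoStep; split_ifs <;> simp [subset_insert]

lemma twoStep_snd_subset (P : Finset Ω × Finset Ω) (e : Ω) :
    P.2 ⊆ (twoStep f Indep θ P e).2 := by
  unfold twoStep; split_ifs <;> simp [subset_insert]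

lemma foldl_fst_subset (L : List Ω) (P : Finset Ω × Finset Ω) :
    P.1 ⊆ (L.foldl (twoStep f Indep θ) P).1 := by
  induction L generalizing P with
  | nil => simp
  | cons a t ih => exact (twoStep_fst_subset P a).trans (ih _)

lemma foldl_snd_subset (L : List Ω) (P : Finset Ω × Finset Ω) :
    P.2 ⊆ (L.foldl (twoStep f Indep θ) P).2 := by
  induction L generalizing P with
  | nil => simp
  | cons a t ih => exact (twoStep_snd_subset P a).trans (ih _)

lemma twoStep_indep (P : Finset Ω × Finset Ω) (e : Ω) (h1 : Indep P.1) (h2 : Indep P.2) :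
    Indep (twoStep f Indep θ P e).1 ∧ Indep (twoStep f Indep θ P e).2 := by
  unfold twoStep; split_ifs with h h'
  · exact ⟨h.1, h2⟩
  · exact ⟨h1, h'.1⟩
  · exact ⟨h1, h2⟩

lemma foldl_indep (L : List Ω) (P : Finset Ω × Finset Ω) (h1 : Indep P.1) (h2 : Indep P.2) :
    Indep (L.foldl (twoStep f Indep θ) P).1 ∧ Indep (L.foldl (twoStep f Indep θ) P).2 := by
  induction L generalizing P with
  | nil => exact ⟨h1, h2⟩
  | cons a t ih =>
    obtain ⟨j1, j2⟩ := twoStep_indep (f := f) (θ := θ) P a h1 h2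
    exact ih _ j1 j2

lemma twoStep_fst_subset' (P : Finset Ω × Finset Ω) (e : Ω) :
    (twoStep f Indep θ P e).1 ⊆ insert e P.1 := by
  unfold twoStep; split_ifs <;> simp [subset_insert]

lemma twoStep_snd_subset' (P : Finset Ω × Finset Ω) (e : Ω) :
    (twoStep f Indep θ P e).2 ⊆ insert e P.2 := by
  unfold twoStep; split_ifs <;> simp [subset_insert]

lemma twoStep_disjoint (P : Finset Ω × Finset Ω) (e : Ω) (h : Disjoint P.1 P.2)
    (h1 : e ∉ P.1) (h2 : e ∉ P.2) :
    Disjoint (twoStep f Indep θ P e).1 (twoStep f Indep θ P e).2 := by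
  unfold twoStep; split_ifs
  · simpa [disjoint_insert_left] using ⟨h2, h⟩
  · simpa [disjoint_insert_right] using ⟨h1, h⟩
  · exact h

lemma foldl_disjoint (L : List Ω) (P : Finset Ω × Finset Ω) (hnd : L.Nodup)
    (hd : Disjoint P.1 P.2) (hfresh : ∀ x ∈ L, x ∉ P.1 ∧ x ∉ P.2) :
    Disjoint (L.foldl (twoStep f Indep θ) P).1 (L.foldl (twoStep f Indep θ) P).2 := by
  induction L generalizing P with
  | nil => exact hd
  | cons a t ih =>
    obtain ⟨ha1, ha2⟩ := hfresh a (List.mem_cons_self)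
    refine ih _ (hnd.of_cons) (twoStep_disjoint P a hd ha1 ha2) ?_
    intro x hx
    have hxa : x ≠ a := by
      rintro rfl; exact (List.nodup_cons.mp hnd).1 hx
    obtain ⟨hx1, hx2⟩ := hfresh x (List.mem_cons_of_mem a hx)
    constructor
    · intro hmem
      have := twoStep_fst_subset' (f := f) (Indep := Indep) (θ := θ) P a hmem
      simp only [mem_insert] at this; tauto
    · intro hmem
      have := twoStep_snd_subset' (f := f) (Indep := Indep) (θ := θ) P a hmem
      simp only [mem_insert] at this; tauto

lemma twoStep_not_added (P : Finset Ω × Finset Ω) (e : Ω)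
    (h1 : e ∉ (twoStep f Indep θ P e).1) (h2 : e ∉ (twoStep f Indep θ P e).2) :
    ¬(Indep (insert e P.1) ∧ θ ≤ f (insert e P.1) - f P.1) ∧
      ¬(Indep (insert e P.2) ∧ θ ≤ f (insert e P.2) - f P.2) := by
  unfold twoStep at h1 h2; split_ifs at h1 h2 with h h' <;> simp_all

lemma foldl_fail (L : List Ω) (P : Finset Ω × Finset Ω) (e : Ω) (heL : e ∈ L)
    (h1 : e ∉ (L.foldl (twoStep f Indep θ) P).1)
    (h2 : e ∉ (L.foldl (twoStep f Indep θ) P).2) :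
    ∃ T₁ T₂ : Finset Ω, T₁ ⊆ (L.foldl (twoStep f Indep θ) P).1 ∧
      T₂ ⊆ (L.foldl (twoStep f Indep θ) P).2 ∧
      ¬(Indep (insert e T₁) ∧ θ ≤ f (insert e T₁) - f T₁) ∧
      ¬(Indep (insert e T₂) ∧ θ ≤ f (insert e T₂) - f T₂) := by
  induction L generalizing P with
  | nil => simp at heL
  | cons a t ih =>
    rcases List.mem_cons.mp heL with rfl | het
    · have hs1 : (twoStep f Indep θ P e).1 ⊆ (t.foldl (twoStep f Indep θ) (twoStep f Indep θ P e)).1 :=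
        foldl_fst_subset t _
      have hs2 : (twoStep f Indep θ P e).2 ⊆ (t.foldl (twoStep f Indep θ) (twoStep f Indep θ P e)).2 :=
        foldl_snd_subset t _
      have he1 : e ∉ (twoStep f Indep θ P e).1 := fun h => h1 (by simpa using hs1 h)
      have he2 : e ∉ (twoStep f Indep θ P e).2 := fun h => h2 (by simpa using hs2 h)
      obtain ⟨n1, n2⟩ := twoStep_not_added P e he1 he2
      exact ⟨P.1, P.2,
        (twoStep_fst_subset P e).trans (by simpa using hs1),
        (twoStep_snd_subset P e).trans (by simpa using hs2), n1, n2⟩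
    · exact ih _ het (by simpa using h1) (by simpa using h2)

end Aux

section Sub

variable {Ω : Type*} [DecidableEq Ω] {f : Finset Ω → ℝ}

lemma marg_mono (hsub : Submodular f) {S T : Finset Ω} {e : Ω} (hTS : T ⊆ S) (he : e ∉ S) :
    f (insert e S) - f S ≤ f (insert e T) - f T := by
  have h := hsub S (insert e T)
  have h1 : S ∪ insert e T = insert e S := by
    rw [union_insert, union_eq_left.mpr hTS]
  have h2 : S ∩ insert e T = T := by
    rw [inter_insert_of_notMem he, inter_eq_right.mpr hTS]
  rw [h1, h2] at h; linarith

lemma submod_union_bound (hsub : Submodular f) (S : Finset Ω) (c : ℝ) :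
    ∀ A : Finset Ω, Disjoint A S → (∀ e ∈ A, f (insert e S) - f S ≤ c) →
      f (S ∪ A) ≤ f S + A.card * c := by
  intro A
  induction A using Finset.induction_on with
  | empty => intro _ _; simp
  | @insert a A' ha ih =>
    intro hd hc
    have haS : a ∉ S := disjoint_left.mp hd (mem_insert_self _ _)
    have hd' : Disjoint A' S := hd.mono_left (subset_insert _ _)
    have key := hsub (S ∪ A') (insert a S)
    have h1 : (S ∪ A') ∪ insert a S = S ∪ insert a A' := by
      ext y; simp; tauto
    have h2 : (S ∪ A') ∩ insert a S = S := by
      rw [union_inter_distrib_right, inter_eq_left.mpr (subset_insert a S),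
        inter_insert_of_notMem ha, disjoint_iff_inter_eq_empty.mp hd', union_empty]
    rw [h1, h2] at key
    have hfa : f (insert a S) - f S ≤ c := hc a (mem_insert_self _ _)
    have hrec : f (S ∪ A') ≤ f S + A'.card * c :=
      ih hd' (fun e he => hc e (mem_insert_of_mem he))
    rw [card_insert_of_notMem ha]
    push_cast
    nlinarith [key, hrec, hfa]

/-- Greedy lower bound: any subset of `pref m` has value at least `τ` per element. -/
lemma greedy_bound (hsub : Submodular f) (h0 : f ∅ = 0)
    {m : ℕ} {g : Fin m → Ω} (hg : Function.Injective g) {pref : ℕ → Finset Ω}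
    (hpref : ∀ j : ℕ, pref j = (Finset.univ.filter (fun i : Fin m => (i : ℕ) < j)).image g)
    {τ : ℝ} (hmarg : ∀ j : Fin m, τ ≤ f (pref ((j : ℕ) + 1)) - f (pref (j : ℕ)))
    (A : Finset Ω) (hA : A ⊆ pref m) : τ * A.card ≤ f A := by
  have hpref0 : pref 0 = ∅ := by rw [hpref]; simp
  have key : ∀ k : ℕ, k ≤ m → τ * (A ∩ pref k).card ≤ f (A ∩ pref k) := by
    intro k
    induction k with
    | zero => intro _; simp [hpref0, h0]
    | succ k ihk =>
      intro hk
      have hkm : k < m := hk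
      have hkle : k ≤ m := le_of_lt hkm
      set j : Fin m := ⟨k, hkm⟩ with hj
      have hstep : pref (k + 1) = insert (g j) (pref k) := by
        rw [hpref, hpref]
        have : (Finset.univ.filter (fun i : Fin m => (i : ℕ) < k + 1)) =
            insert j (Finset.univ.filter (fun i : Fin m => (i : ℕ) < k)) := by
          ext i
          simp only [mem_filter, mem_univ, true_and, mem_insert, Nat.lt_succ_iff_lt_or_eq]
          constructor
          · rintro (h | h)
            · exact Or.inr h
            · exact Or.inl (Fin.ext h)
          · rintro (rfl | h)
            · exact Or.inr rfl
            · exact Or.inl h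
        rw [this, image_insert]
      have hgj : g j ∉ pref k := by
        rw [hpref]
        simp only [mem_image, mem_filter, mem_univ, true_and]
        rintro ⟨i, hi, hgi⟩
        have : i = j := hg hgi
        subst this
        exact absurd hi (lt_irrefl _)
      have hAk : A ∩ pref k ⊆ pref k := inter_subset_right
      by_cases hin : g j ∈ A
      · have heq : A ∩ pref (k + 1) = insert (g j) (A ∩ pref k) := by
          rw [hstep, inter_insert_of_mem hin]
        have hgjA : g j ∉ A ∩ pref k := fun h => hgj (mem_of_mem_inter_right h)
        have hm1 : f (insert (g j) (pref k)) - f (pref k) ≤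
            f (insert (g j) (A ∩ pref k)) - f (A ∩ pref k) := marg_mono hsub hAk hgj
        have hm2 : τ ≤ f (pref (k + 1)) - f (pref k) := hmarg j
        rw [hstep] at hm2
        rw [heq, card_insert_of_notMem hgjA]
        push_cast
        have := ihk hkle
        nlinarith
      · have heq : A ∩ pref (k + 1) = A ∩ pref k := by
          rw [hstep, inter_insert_of_notMem hin]
        rw [heq]; exact ihk hkle
  have := key m le_rfl
  rwa [inter_eq_left.mpr hA] at this

end Sub


theorem stmt_15 {Ω : Type*} [DecidableEq Ω] [Fintype Ω] (f : Finset Ω → ℝ)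
    (hsub : Submodular f) (hnonneg : ∀ X : Finset Ω, 0 ≤ f X) (h0 : f ∅ = 0)
    (Indep : Finset Ω → Prop) (hM : IsMatroid Indep)
    (τ ε : ℝ) (hτ : 0 < τ) (hε : 0 ≤ ε)
    (L : List Ω) (hnodup : L.Nodup) (hall : ∀ x : Ω, x ∈ L)
    (S₁ S₂ : Finset Ω)
    (hrun : (S₁, S₂) = L.foldl (twoStep f Indep (ε * τ)) (∅, ∅))
    -- `Cτ` is independent and admits a greedy ordering whose marginals are all ≥ τ
    (m : ℕ) (g : Fin m → Ω) (hg : Function.Injective g)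
    (pref : ℕ → Finset Ω)
    (hpref : ∀ j : ℕ, pref j = (Finset.univ.filter (fun i : Fin m => (i : ℕ) < j)).image g)
    (hmarg : ∀ j : Fin m, τ ≤ f (pref ((j : ℕ) + 1)) - f (pref (j : ℕ)))
    (Cτ : Finset Ω) (hCτ : Cτ = pref m) (hCind : Indep Cτ)
    -- both constructed sets are small
    (hS₁ : (S₁.card : ℝ) < (Cτ.card : ℝ) / 4) (hS₂ : (S₂.card : ℝ) < (Cτ.card : ℝ) / 4) :
    ∃ A : Finset Ω, A ⊆ Cτ ∧ Disjoint A (S₁ ∪ S₂) ∧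
      (Cτ.card : ℝ) / 2 ≤ (A.card : ℝ) ∧
      Indep (S₁ ∪ A) ∧ Indep (S₂ ∪ A) ∧
      (1 - 2 * ε) * τ * (A.card : ℝ) ≤ f S₁ + f S₂ := by
  set θ : ℝ := ε * τ with hθ
  set F := L.foldl (twoStep f Indep θ) (∅, ∅) with hF
  have hF1 : S₁ = F.1 := congrArg Prod.fst hrun
  have hF2 : S₂ = F.2 := congrArg Prod.snd hrun
  -- basic invariants of the run
  have hind : Indep S₁ ∧ Indep S₂ := by
    rw [hF1, hF2]
    exact foldl_indep L (∅, ∅) hM.1 hM.1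
  have hdisj12 : Disjoint S₁ S₂ := by
    rw [hF1, hF2]
    exact foldl_disjoint L (∅, ∅) hnodup (by simp) (by simp)
  -- extend S₁ inside Cτ
  obtain ⟨A₁, hA₁C, hA₁d, hA₁I, hA₁c⟩ :=
    matroid_extend_aux hM Cτ hCind Cτ.card S₁ hind.1 (by omega)
  -- extend S₂ inside A₁
  have hA₁ind : Indep A₁ := hM.2.1 _ _ hA₁I (subset_union_right)
  obtain ⟨A, hAA₁, hAd₂, hAI₂, hAc₂⟩ :=
    matroid_extend_aux hM A₁ hA₁ind A₁.card S₂ hind.2 (by omega)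
  have hAC : A ⊆ Cτ := hAA₁.trans hA₁C
  have hAd₁ : Disjoint A S₁ := hA₁d.mono_left hAA₁
  have hAI₁ : Indep (S₁ ∪ A) :=
    hM.2.1 _ _ hA₁I (union_subset_union_right hAA₁)
  have hAdisj : Disjoint A (S₁ ∪ S₂) := by
    rw [disjoint_union_right]; exact ⟨hAd₁, hAd₂⟩
  -- cardinality bound
  have hcard : (Cτ.card : ℝ) ≤ (S₁.card : ℝ) + (S₂.card : ℝ) + (A.card : ℝ) := by
    have : Cτ.card ≤ S₁.card + S₂.card + A.card := by omega
    exact_mod_cast this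
  have hAbig : (Cτ.card : ℝ) / 2 ≤ (A.card : ℝ) := by linarith
  -- marginal bounds for elements of A
  have hmargA : ∀ e ∈ A, (f (insert e S₁) - f S₁ ≤ θ) ∧ (f (insert e S₂) - f S₂ ≤ θ) := by
    intro e he
    have he1 : e ∉ S₁ := disjoint_left.mp hAd₁ he
    have he2 : e ∉ S₂ := disjoint_left.mp hAd₂ he
    have heF1 : e ∉ F.1 := by rw [← hF1]; exact he1
    have heF2 : e ∉ F.2 := by rw [← hF2]; exact he2
    obtain ⟨T₁, T₂, hT₁, hT₂, hn1, hn2⟩ := foldl_fail L (∅, ∅) e (hall e) heF1 heF2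
    rw [← hF1] at hT₁
    rw [← hF2] at hT₂
    have hIT₁ : Indep (insert e T₁) :=
      hM.2.1 _ _ hAI₁ (insert_subset (mem_union_right _ he) (hT₁.trans subset_union_left))
    have hIT₂ : Indep (insert e T₂) :=
      hM.2.1 _ _ hAI₂ (insert_subset (mem_union_right _ he) (hT₂.trans subset_union_left))
    have hlt1 : f (insert e T₁) - f T₁ < θ := lt_of_not_ge (fun h => hn1 ⟨hIT₁, h⟩)
    have hlt2 : f (insert e T₂) - f T₂ < θ := lt_of_not_ge (fun h => hn2 ⟨hIT₂, h⟩)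
    constructor
    · have := marg_mono hsub hT₁ he1
      linarith
    · have := marg_mono hsub hT₂ he2
      linarith
  -- union bounds
  have hub1 : f (S₁ ∪ A) ≤ f S₁ + A.card * θ :=
    submod_union_bound hsub S₁ θ A hAd₁ (fun e he => (hmargA e he).1)
  have hub2 : f (S₂ ∪ A) ≤ f S₂ + A.card * θ :=
    submod_union_bound hsub S₂ θ A hAd₂ (fun e he => (hmargA e he).2)
  -- f A ≤ f (S₁ ∪ A) + f (S₂ ∪ A)
  have hinter : (S₁ ∪ A) ∩ (S₂ ∪ A) = A := by
    ext x
    simp only [mem_inter, mem_union]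
    have h12 : x ∈ S₁ → x ∉ S₂ := fun h => disjoint_left.mp hdisj12 h
    have hA1 : x ∈ A → x ∉ S₁ := fun h => disjoint_left.mp hAd₁ h
    have hA2 : x ∈ A → x ∉ S₂ := fun h => disjoint_left.mp hAd₂ h
    tauto
  have hfA : f A ≤ f (S₁ ∪ A) + f (S₂ ∪ A) := by
    have := hsub (S₁ ∪ A) (S₂ ∪ A)
    rw [hinter] at this
    have := hnonneg ((S₁ ∪ A) ∪ (S₂ ∪ A))
    linarith
  -- greedy lower bound
  have hlb : τ * A.card ≤ f A := by
    refine greedy_bound hsub h0 hg hpref hmarg A ?_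
    rw [← hCτ]; exact hAC
  refine ⟨A, hAC, hAdisj, hAbig, hAI₁, hAI₂, ?_⟩
  have hexp : (1 - 2 * ε) * τ * (A.card : ℝ) =
      τ * A.card - 2 * ((A.card : ℝ) * (ε * τ)) := by ring
  rw [hexp, hθ] at *
  linarith
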